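/- Let H be a self-adjoint element (H = H*) of a unital C*-algebra 𝔄 and let ω be a pure state on 𝔄 (an extreme point of the convex set of states on 𝔄). If ω is invariant under the dynamics generated by H, i.e., ω(exp(itH) · A · exp(−itH)) = ω(A) for all t ∈ ℝ and all A ∈ 𝔄, then ω is an eigenstate of H with eigenvalue ω(H). -/

import Mathlib

open Complex NormedSpace

variable {𝔄 : Type*} [CStarAlgebra 𝔄]

/-- A state on a unital C*-algebra `𝔄`: a continuous linear functional `ω : 𝔄 → ℂ`
which is normalized (`ω 1 = 1`) and positive (`ω (a* a)` is a nonnegative real number). -/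
def IsState (ω : 𝔄 → ℂ) : Prop :=
  Continuous ω ∧ IsLinearMap ℂ ω ∧ ω 1 = 1 ∧
    ∀ a : 𝔄, ∃ r : ℝ, 0 ≤ r ∧ ω (star a * a) = (r : ℂ)

/-- `ω` is an eigenstate of `A` with eigenvalue `l` if `ω (B * A) = l * ω B` for all `B`. -/
def IsEigenstate (ω : 𝔄 → ℂ) (A : 𝔄) (l : ℂ) : Prop :=
  ∀ B : 𝔄, ω (B * A) = l * ω B

lemma isState_pos_re {ω : 𝔄 → ℂ} (h : IsState ω) (a : 𝔄) :
    0 ≤ (ω (star a * a)).re ∧ (ω (star a * a)).im = 0 := by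
  obtain ⟨r, hr0, hr⟩ := h.2.2.2 a
  rw [hr]; simp [hr0]

lemma isState_herm {ω : 𝔄 → ℂ} (h : IsState ω) (a : 𝔄) :
    ω (star a) = (starRingEnd ℂ) (ω a) := by
  have hlin := h.2.1
  have hone := h.2.2.1
  have hpos := h.2.2.2
  obtain ⟨s, -, hs⟩ := hpos (1 + a)
  obtain ⟨t, -, ht⟩ := hpos (1 + Complex.I • a)
  obtain ⟨r, -, hr⟩ := hpos a
  have e1 : star (1 + a) * (1 + a) = 1 + star a + a + star a * a := by
    simp [star_add, add_mul, mul_add]; abel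
  have e2 : star (1 + Complex.I • a) * (1 + Complex.I • a)
      = 1 + Complex.I • a - Complex.I • star a + star a * a := by
    simp only [star_add, star_smul, star_one, RCLike.star_def, Complex.conj_I]
    simp only [add_mul, mul_add, one_mul, mul_one, neg_smul, neg_mul, smul_mul_assoc,
      mul_smul_comm, smul_smul, smul_add, smul_neg, Complex.I_mul_I, neg_neg, one_smul]
    abel
  have hs' : (1 : ℂ) + ω (star a) + ω a + r = s := by
    rw [← hr, ← hone]
    have := hs; rw [e1] at this
    simpa [hlin.map_add] using this
  have ht' : (1 : ℂ) + Complex.I * ω a - Complex.I * ω (star a) + r = t := by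
    rw [← hr, ← hone]
    have := ht; rw [e2] at this
    simpa [hlin.map_add, hlin.map_smul, hlin.map_neg, sub_eq_add_neg, smul_eq_mul] using this
  have him : (ω (star a)).im + (ω a).im = 0 := by
    have := congrArg Complex.im hs'; simpa using this
  have hre : (ω a).re - (ω (star a)).re = 0 := by
    have := congrArg Complex.im ht'; simp [Complex.add_im, Complex.sub_im, Complex.mul_im] at this
    linarith
  apply Complex.ext <;> simp [Complex.conj_re, Complex.conj_im] <;> linarith

lemma isState_null {ω : 𝔄 → ℂ} (h : IsState ω) {x : 𝔄} (hx : ω (star x * x) = 0)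
    (B : 𝔄) : ω (B * x) = 0 := by
  have hlin := h.2.1
  have hpos := h.2.2.2
  set a := star B with ha
  set s := ω (B * x) with hsdef
  obtain ⟨r, hr0, hr⟩ := hpos a
  have expand : ∀ c : ℂ, ω (star (c • a + x) * (c • a + x))
      = c * (starRingEnd ℂ) c * r + (starRingEnd ℂ) c * s + c * (starRingEnd ℂ) s := by
    intro c
    have e : star (c • a + x) * (c • a + x)
        = (c * (starRingEnd ℂ) c) • (star a * a) + (starRingEnd ℂ) c • (star a * x)
          + c • (star x * a) + star x * x := by
      simp only [star_add, star_smul, RCLike.star_def, add_mul, mul_add, smul_mul_assoc,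
        mul_smul_comm, smul_smul, smul_add]
      abel
    rw [e]
    have h1 : ω (star a * x) = s := by rw [ha]; simp [hsdef, star_star]
    have h2 : ω (star x * a) = (starRingEnd ℂ) s := by
      have e' : star x * a = star (star a * x) := by simp [star_mul]
      rw [e', isState_herm h _, h1]
    simp only [hlin.map_add, hlin.map_smul, smul_eq_mul, hx, hr, h1, h2, add_zero]
  set t : ℝ := 1 / (r + 1) with htdef
  have htpos : 0 < t := by positivity
  have key := (isState_pos_re h ((-(t : ℂ) * s) • a + x)).1
  rw [expand _] at key
  have hval : ((-(t:ℂ) * s) * (starRingEnd ℂ) (-(t:ℂ)*s) * r + (starRingEnd ℂ) (-(t:ℂ)*s) * s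
      + (-(t:ℂ)*s) * (starRingEnd ℂ) s)
      = ((t^2 * Complex.normSq s * r - 2 * (t * Complex.normSq s) : ℝ) : ℂ) := by
    simp only [map_mul, map_neg, Complex.conj_ofReal]
    push_cast
    linear_combination ((t:ℂ)^2*(r:ℂ) - 2*(t:ℂ)) * Complex.mul_conj s
  rw [hval] at key
  rw [Complex.ofReal_re] at key
  have hns : 0 ≤ Complex.normSq s * (t * (t * r - 2)) := by nlinarith
  have hneg : t * r - 2 < 0 := by
    have h1 : t * r < 1 := by
      rw [htdef, div_mul_eq_mul_div, one_mul, div_lt_one (by linarith)]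
      linarith
    linarith
  have hfac : t * (t * r - 2) < 0 := mul_neg_of_pos_of_neg htpos hneg
  have h0' : Complex.normSq s = 0 := by
    rcases lt_or_eq_of_le (Complex.normSq_nonneg s) with hlt | heq
    · exact absurd hns (not_le.mpr (mul_neg_of_pos_of_neg hlt hfac))
    · exact heq.symm
  rw [hsdef] at *
  exact Complex.normSq_eq_zero.mp h0'

lemma state_unitary_mul {ω : 𝔄 → ℂ}
    (hpure : ω ∈ Set.extremePoints ℝ {φ : 𝔄 → ℂ | IsState φ})
    {U : 𝔄} (hU1 : star U * U = 1) (hU2 : U * star U = 1)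
    (hcomm : ∀ A : 𝔄, ω (U * A) = ω (A * U)) (B : 𝔄) :
    ω (B * U) = ω U * ω B := by
  obtain ⟨hω, hext⟩ := hpure
  have hstate : IsState ω := hω
  obtain ⟨hcont, hlin, hone, hpos⟩ := hstate
  have hstate : IsState ω := hω
  set c := ω U with hc
  have hconj : ω (star U) = (starRingEnd ℂ) c := isState_herm hstate U
  have hcomm' : ∀ C : 𝔄, ω (star U * C) = ω (C * star U) := by
    intro C
    have h1 : star U * C = star (star C * U) := by simp [star_mul]
    have h2 : C * star U = star (U * star C) := by simp [star_mul]
    rw [h1, h2, isState_herm hstate, isState_herm hstate, hcomm (star C)]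
  have hUBU : ∀ A : 𝔄, ω (star U * A * U) = ω A := by
    intro A
    rw [mul_assoc, hcomm' (A * U), mul_assoc, hU2, mul_one]
  -- ω (star (U - c•1) * (U - c•1)) = 1 - normSq c
  have hxval : ω (star (U - c • 1) * (U - c • 1)) = ((1 - Complex.normSq c : ℝ) : ℂ) := by
    have e : star (U - c • 1) * (U - c • 1)
        = star U * U - ((starRingEnd ℂ) c) • U - c • star U + (c * (starRingEnd ℂ) c) • (1 : 𝔄) := by
      simp only [star_sub, star_smul, star_one, RCLike.star_def, sub_mul, mul_sub, smul_sub,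
        smul_mul_assoc, mul_smul_comm, smul_smul, mul_one, one_mul]
      abel
    rw [e]
    simp only [hlin.map_add, hlin.map_sub, hlin.map_smul, smul_eq_mul, hU1, hone, hconj, hc]
    push_cast
    linear_combination -Complex.mul_conj (ω U)
  obtain ⟨r, hr0, hr⟩ := hpos (U - c • 1)
  have hrval : 1 - Complex.normSq c = r := by
    have := hxval.symm.trans hr
    exact_mod_cast this
  by_cases hcase : Complex.normSq c = 1
  · -- boundary case: U - c•1 is ω-null
    have hzero : ω (star (U - c • 1) * (U - c • 1)) = 0 := by
      rw [hxval, hcase]; simp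
    have h0 := isState_null hstate hzero B
    have e : B * (U - c • 1) = B * U - c • B := by
      rw [mul_sub, mul_smul_comm, mul_one]
    rw [e, hlin.map_sub, hlin.map_smul, smul_eq_mul] at h0
    linear_combination h0
  · have hlt : Complex.normSq c < 1 := lt_of_le_of_ne (by linarith) hcase
    -- the family of comparison states
    set m : ℂ → ℝ := fun w => 2 + 2 * ((starRingEnd ℂ) w * c).re with hm
    set Φ : ℂ → 𝔄 → ℂ := fun w A =>
      ((m w : ℝ) : ℂ)⁻¹ * ω (star (U + w • 1) * A * (U + w • 1)) with hΦ
    have habs : ‖c‖ < 1 := by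
      have := Complex.sq_norm c
      nlinarith [norm_nonneg c, Complex.sq_norm c]
    have hmpos : ∀ w : ℂ, ‖w‖ = 1 → 0 < m w := by
      intro w hw
      have h1 : |((starRingEnd ℂ) w * c).re| ≤ ‖(starRingEnd ℂ) w * c‖ :=
        Complex.abs_re_le_norm _
      have h2 : ‖(starRingEnd ℂ) w * c‖ = ‖c‖ := by
        simp [map_mul, RCLike.norm_conj, hw]
      rw [h2] at h1
      have := abs_le.mp h1
      simp only [hm]
      linarith [this.1]
    have hexp : ∀ (w : ℂ), w * (starRingEnd ℂ) w = 1 → ∀ A : 𝔄,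
        ω (star (U + w • 1) * A * (U + w • 1))
          = 2 * ω A + w * ω (A * star U) + (starRingEnd ℂ) w * ω (A * U) := by
      intro w hw A
      have e : star (U + w • 1) * A * (U + w • 1)
          = star U * A * U + w • (star U * A) + ((starRingEnd ℂ) w) • (A * U)
            + (w * (starRingEnd ℂ) w) • A := by
        simp only [star_add, star_smul, star_one, RCLike.star_def, add_mul, mul_add,
          smul_mul_assoc, mul_smul_comm, smul_smul, smul_add, mul_one, one_mul]
        abel
      rw [e]
      simp only [hlin.map_add, hlin.map_smul, smul_eq_mul, hUBU A, hcomm' A]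
      rw [hw]
      ring
    have hwconj : ∀ w : ℂ, w * (starRingEnd ℂ) w = 1 → ‖w‖ = 1 := by
      intro w hw
      have h1 : (Complex.normSq w : ℂ) = 1 := by rw [← Complex.mul_conj w]; exact hw
      have h2 : Complex.normSq w = 1 := by exact_mod_cast h1
      rw [← Complex.sq_norm] at h2
      nlinarith [norm_nonneg w]
    have hmC : ∀ w : ℂ, ((m w : ℝ) : ℂ) = 2 + ((starRingEnd ℂ) w * c + w * (starRingEnd ℂ) c) := by
      intro w
      calc ((m w : ℝ) : ℂ) = 2 + ((2 * ((starRingEnd ℂ) w * c).re : ℝ) : ℂ) := by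
            simp only [hm]; push_cast; ring
        _ = 2 + ((starRingEnd ℂ) w * c + (starRingEnd ℂ) ((starRingEnd ℂ) w * c)) := by
            rw [Complex.add_conj]
        _ = 2 + ((starRingEnd ℂ) w * c + w * (starRingEnd ℂ) c) := by
            simp [map_mul, Complex.conj_conj]
    have hΦstate : ∀ w : ℂ, w * (starRingEnd ℂ) w = 1 → IsState (Φ w) := by
      intro w hw
      have habsw := hwconj w hw
      have hmw := hmpos w habsw
      have hmne : ((m w : ℝ) : ℂ) ≠ 0 := Complex.ofReal_ne_zero.mpr (ne_of_gt hmw)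
      refine ⟨?_, ⟨?_, ?_⟩, ?_, ?_⟩
      · exact continuous_const.mul
          (hcont.comp ((continuous_mul_right _).comp (continuous_mul_left _)))
      · intro x y
        simp only [hΦ]
        have e : star (U + w • 1) * (x + y) * (U + w • 1)
            = star (U + w • 1) * x * (U + w • 1) + star (U + w • 1) * y * (U + w • 1) := by
          simp only [mul_add, add_mul]
          abel
        rw [e, hlin.map_add]
        ring
      · intro t x
        simp only [hΦ]
        have e : star (U + w • 1) * (t • x) * (U + w • 1)
            = t • (star (U + w • 1) * x * (U + w • 1)) := by
          rw [mul_smul_comm, smul_mul_assoc]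
        rw [e, hlin.map_smul]
        simp only [smul_eq_mul]
        ring
      · have h1 := hexp w hw 1
        simp only [one_mul, mul_one] at h1
        simp only [hΦ, one_mul, mul_one]
        rw [h1, hone, hconj]
        have h2 : (2:ℂ) * 1 + w * (starRingEnd ℂ) c + (starRingEnd ℂ) w * ω U = ((m w : ℝ) : ℂ) := by
          rw [hmC w, ← hc]; ring
        rw [h2, inv_mul_cancel₀ hmne]
      · intro a
        obtain ⟨r', hr'0, hr'⟩ := hpos (a * (U + w • 1))
        refine ⟨r' / m w, div_nonneg hr'0 (le_of_lt hmw), ?_⟩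
        have e : star (U + w • 1) * (star a * a) * (U + w • 1)
            = star (a * (U + w • 1)) * (a * (U + w • 1)) := by
          simp [star_mul, mul_assoc]
        simp only [hΦ]
        rw [e, hr', Complex.ofReal_div]
        field_simp
    have key : ∀ w : ℂ, w * (starRingEnd ℂ) w = 1 →
        w * ω (B * star U) + (starRingEnd ℂ) w * ω (B * U)
          = ((starRingEnd ℂ) w * c + w * (starRingEnd ℂ) c) * ω B := by
      intro w hw
      have hwn : (-w) * (starRingEnd ℂ) (-w) = 1 := by
        simpa using hw
      have habsw := hwconj w hw
      have habsw' : ‖-w‖ = 1 := by simpa using habsw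
      have hmw := hmpos w habsw
      have hmw' := hmpos (-w) habsw'
      have hmne : ((m w : ℝ) : ℂ) ≠ 0 := Complex.ofReal_ne_zero.mpr (ne_of_gt hmw)
      have hmne' : ((m (-w) : ℝ) : ℂ) ≠ 0 := Complex.ofReal_ne_zero.mpr (ne_of_gt hmw')
      have hseg : ω ∈ openSegment ℝ (Φ w) (Φ (-w)) := by
        refine ⟨m w / 4, m (-w) / 4, div_pos hmw (by norm_num), div_pos hmw' (by norm_num), ?_, ?_⟩
        · simp only [hm, map_neg, neg_mul, Complex.neg_re]
          ring
        · funext A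
          simp only [Pi.add_apply, Pi.smul_apply, hΦ, Complex.real_smul]
          rw [hexp w hw A, hexp (-w) hwn A]
          simp only [map_neg, neg_mul, Complex.ofReal_div]
          push_cast
          field_simp
          ring
      have hΦeq := hext (hΦstate w hw) (hΦstate (-w) hwn) hseg
      have hB := congrFun hΦeq B
      simp only [hΦ] at hB
      rw [hexp w hw B, inv_mul_eq_iff_eq_mul₀ hmne] at hB
      rw [hmC w] at hB
      linear_combination hB
    have e1 := key 1 (by simp)
    have e2 := key Complex.I (by simp [Complex.conj_I])
    rw [map_one] at e1
    rw [Complex.conj_I] at e2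
    have h2I : (2 * Complex.I) * ω (B * U) = (2 * Complex.I) * (c * ω B) := by
      linear_combination Complex.I * e1 - e2
    have hI2 : (2 * Complex.I) ≠ 0 := by simp [Complex.I_ne_zero]
    exact mul_left_cancel₀ hI2 h2I


/-- A pure state (an extreme point of the set of states) invariant under the dynamics
generated by a self-adjoint element `H` is an eigenstate of `H` (with eigenvalue
`ω H`). -/
theorem pure_invariant_state_is_eigenstate (H : 𝔄) (hH : star H = H) (ω : 𝔄 → ℂ)
    (hpure : ω ∈ Set.extremePoints ℝ {φ : 𝔄 → ℂ | IsState φ})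
    (hinv : ∀ (t : ℝ) (A : 𝔄),
      ω (NormedSpace.exp ((Complex.I * (t : ℂ)) • H) * A *
          NormedSpace.exp ((-(Complex.I * (t : ℂ))) • H)) = ω A) :
    IsEigenstate ω H (ω H) := by
  intro B
  have hω : IsState ω := hpure.1
  obtain ⟨hcont, hlin, hone, hpos⟩ := hω
  set X : 𝔄 := Complex.I • H with hX
  -- basic exponential facts
  have hsm : ∀ t : ℝ, (t : ℂ) • X = (Complex.I * (t : ℂ)) • H := by
    intro t; rw [hX, smul_smul, mul_comm]
  have hstar : ∀ t : ℝ, star ((Complex.I * (t : ℂ)) • H) = -((Complex.I * (t : ℂ)) • H) := by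
    intro t
    rw [star_smul, hH, ← neg_smul]
    congr 1
    simp [Complex.conj_ofReal]
  have hEE : ∀ t : ℝ, NormedSpace.exp ((Complex.I * (t : ℂ)) • H) * NormedSpace.exp (-((Complex.I * (t : ℂ)) • H)) = 1 := by
    intro t
    rw [← exp_add_of_commute_of_mem_ball (𝕂 := ℂ) ((Commute.refl ((Complex.I * (t : ℂ)) • H)).neg_right)
      ((expSeries_radius_eq_top ℂ 𝔄).symm ▸ edist_lt_top _ _)
      ((expSeries_radius_eq_top ℂ 𝔄).symm ▸ edist_lt_top _ _)]
    simp [exp_zero]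
  have hEE' : ∀ t : ℝ, NormedSpace.exp (-((Complex.I * (t : ℂ)) • H)) * NormedSpace.exp ((Complex.I * (t : ℂ)) • H) = 1 := by
    intro t
    rw [← exp_add_of_commute_of_mem_ball (𝕂 := ℂ) ((Commute.refl ((Complex.I * (t : ℂ)) • H)).neg_left)
      ((expSeries_radius_eq_top ℂ 𝔄).symm ▸ edist_lt_top _ _)
      ((expSeries_radius_eq_top ℂ 𝔄).symm ▸ edist_lt_top _ _)]
    simp [exp_zero]
  have hstarexp : ∀ t : ℝ, star (NormedSpace.exp ((Complex.I * (t : ℂ)) • H))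
      = NormedSpace.exp (-((Complex.I * (t : ℂ)) • H)) := by
    intro t
    rw [star_exp, hstar]
  -- centralizer property
  have hcomm : ∀ (t : ℝ) (A : 𝔄), ω (NormedSpace.exp ((Complex.I * (t : ℂ)) • H) * A)
      = ω (A * NormedSpace.exp ((Complex.I * (t : ℂ)) • H)) := by
    intro t A
    have h1 := hinv t (A * NormedSpace.exp ((Complex.I * (t : ℂ)) • H))
    rw [neg_smul] at h1
    have e : NormedSpace.exp ((Complex.I * (t : ℂ)) • H) * (A * NormedSpace.exp ((Complex.I * (t : ℂ)) • H)) *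
        NormedSpace.exp (-((Complex.I * (t : ℂ)) • H)) = NormedSpace.exp ((Complex.I * (t : ℂ)) • H) * A := by
      rw [← mul_assoc, mul_assoc _ _ (NormedSpace.exp (-((Complex.I * (t : ℂ)) • H))), hEE t, mul_one]
    rw [e] at h1
    exact h1
  -- multiplicativity on the unitary group
  have hmul : ∀ t : ℝ, ω (B * NormedSpace.exp ((t : ℂ) • X)) = ω (NormedSpace.exp ((t : ℂ) • X)) * ω B := by
    intro t
    rw [hsm t]
    refine state_unitary_mul hpure ?_ ?_ (hcomm t) B
    · rw [hstarexp t]; exact hEE' t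
    · rw [hstarexp t]; exact hEE t
  -- differentiation at 0
  have hd0 : HasDerivAt (fun u : ℂ => NormedSpace.exp (u • X)) X 0 := by
    simpa using hasDerivAt_exp_smul_const X (0 : ℂ)
  have hofReal : HasDerivAt (fun t : ℝ => ((t : ℝ) : ℂ)) 1 0 := by
    exact Complex.ofRealCLM.hasDerivAt (x := (0 : ℝ))
  have hdr : HasDerivAt (fun t : ℝ => NormedSpace.exp ((t : ℂ) • X)) X 0 := by
    have h := HasDerivAt.scomp_of_eq (x := (0 : ℝ)) hd0 hofReal (by simp)
    rw [one_smul] at h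
    exact h
  let ωL : 𝔄 →L[ℂ] ℂ := { toLinearMap := IsLinearMap.mk' ω hlin, cont := hcont }
  have hF1 : HasDerivAt (fun t : ℝ => ω (B * NormedSpace.exp ((t : ℂ) • X))) (ω (B * X)) 0 := by
    have h1 : HasDerivAt (fun t : ℝ => B * NormedSpace.exp ((t : ℂ) • X)) (B * X) 0 := hdr.const_mul B
    have h2 := ((ωL.restrictScalars ℝ).hasFDerivAt).comp_hasDerivAt 0 h1
    exact h2
  have hG : HasDerivAt (fun t : ℝ => ω (NormedSpace.exp ((t : ℂ) • X))) (ω X) 0 := by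
    have h2 := ((ωL.restrictScalars ℝ).hasFDerivAt).comp_hasDerivAt 0 hdr
    exact h2
  have hF2 : HasDerivAt (fun t : ℝ => ω (NormedSpace.exp ((t : ℂ) • X)) * ω B) (ω X * ω B) 0 :=
    hG.mul_const (ω B)
  have hfun : (fun t : ℝ => ω (B * NormedSpace.exp ((t : ℂ) • X)))
      = fun t : ℝ => ω (NormedSpace.exp ((t : ℂ) • X)) * ω B := funext hmul
  rw [hfun] at hF1
  have huniq : ω (B * X) = ω X * ω B := (hF2.unique hF1).symm
  have h1 : ω (B * X) = Complex.I * ω (B * H) := by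
    rw [hX, mul_smul_comm, hlin.map_smul, smul_eq_mul]
  have h2 : ω X = Complex.I * ω H := by
    rw [hX, hlin.map_smul, smul_eq_mul]
  rw [h1, h2] at huniq
  exact mul_left_cancel₀ Complex.I_ne_zero (by linear_combination huniq)
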